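/- With notation as in the reluctance model, define $g_c(\beta) = (\beta(q_F(\beta) - q_R(\beta)) + q_R(\beta))(\eta_c + \beta(1-\eta_c)) - \beta$ where $q_i(\beta) = \alpha_i(w\beta/(\beta + b(1-\beta)) + \epsilon)$, $0 < \eta_c < 1$, $\alpha_F > \alpha_R > 0$, $w, b, \epsilon > 0$. If $b\alpha_F \ge \alpha_R$, then $g_c''(\beta) > 0$ for all $\beta \in [0,1)$, i.e., $g_c$ is strictly convex on $[0,1)$. -/

import Mathlib

private lemma aux_dS (w b x : ℝ) (hx : x + b * (1 - x) ≠ 0) :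
    HasDerivAt (fun y : ℝ => w * y / (y + b * (1 - y))) (w * b / (x + b * (1 - x)) ^ 2) x := by
  have hden : HasDerivAt (fun y : ℝ => y + b * (1 - y)) (1 - b) x := by
    have h2 := (((hasDerivAt_const x (1:ℝ)).sub (hasDerivAt_id x)).const_mul b)
    have := (hasDerivAt_id x).add h2
    refine this.congr_deriv ?_; ring
  have hnum : HasDerivAt (fun y : ℝ => w * y) w x := by
    simpa using (hasDerivAt_id x).const_mul w
  have := hnum.div hden hx
  refine this.congr_deriv ?_
  field_simp
  ring

private lemma aux_dS2 (w b x : ℝ) (hx : x + b * (1 - x) ≠ 0) :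
    HasDerivAt (fun y : ℝ => w * b / (y + b * (1 - y)) ^ 2)
      (-2 * w * b * (1 - b) / (x + b * (1 - x)) ^ 3) x := by
  have hden : HasDerivAt (fun y : ℝ => y + b * (1 - y)) (1 - b) x := by
    have h2 := (((hasDerivAt_const x (1:ℝ)).sub (hasDerivAt_id x)).const_mul b)
    have := (hasDerivAt_id x).add h2
    refine this.congr_deriv ?_; ring
  have hdenp : HasDerivAt (fun y : ℝ => (y + b * (1 - y)) ^ 2)
      (2 * (x + b * (1 - x)) ^ 1 * (1 - b)) x := hden.pow 2
  have hx2 : (x + b * (1 - x)) ^ 2 ≠ 0 := pow_ne_zero _ hx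
  have := (hasDerivAt_const x (w * b)).div hdenp hx2
  refine this.congr_deriv ?_
  field_simp
  ring

set_option maxHeartbeats 1000000 in
theorem stmt_8 (αF αR w b ε ηc : ℝ)
    (hα : αF > αR) (hαR : 0 < αR) (hw : 0 < w) (hb : 0 < b) (hε : 0 < ε)
    (hηc : ηc ∈ Set.Ioo (0:ℝ) 1)
    (hbα : b * αF ≥ αR)
    (qF qR gc : ℝ → ℝ)
    (hqF : ∀ β, qF β = αF * (w * β / (β + b * (1 - β)) + ε))
    (hqR : ∀ β, qR β = αR * (w * β / (β + b * (1 - β)) + ε))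
    (hgc : ∀ β, gc β = (β * (qF β - qR β) + qR β) * (ηc + β * (1 - ηc)) - β) :
    (∀ β ∈ Set.Ico (0:ℝ) 1, 0 < deriv (deriv gc) β)
    ∧ StrictConvexOn ℝ (Set.Ico (0:ℝ) 1) gc := by
  obtain ⟨hη0, hη1⟩ := hηc
  set Δ := αF - αR with hΔ
  have hΔpos : 0 < Δ := sub_pos.mpr hα
  -- rewrite gc
  have hgcfun : gc = fun x => (Δ * x + αR) * (w * x / (x + b * (1 - x)) + ε) * (ηc + x * (1 - ηc)) - x := by
    funext x
    rw [hgc, hqF, hqR, hΔ]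
    ring
  -- the first derivative function
  set g1 : ℝ → ℝ := fun x =>
    (Δ * (w * x / (x + b * (1 - x)) + ε) + (Δ * x + αR) * (w * b / (x + b * (1 - x)) ^ 2))
      * (ηc + x * (1 - ηc))
    + (Δ * x + αR) * (w * x / (x + b * (1 - x)) + ε) * (1 - ηc) - 1 with hg1
  -- basic pieces
  have hA : ∀ x : ℝ, HasDerivAt (fun y : ℝ => Δ * y + αR) Δ x := by
    intro x
    simpa using ((hasDerivAt_id x).const_mul Δ).add_const αR
  have hE : ∀ x : ℝ, HasDerivAt (fun y : ℝ => ηc + y * (1 - ηc)) (1 - ηc) x := by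
    intro x
    simpa using ((hasDerivAt_id x).mul_const (1 - ηc)).const_add ηc
  have hSfull : ∀ x : ℝ, x + b * (1 - x) ≠ 0 →
      HasDerivAt (fun y : ℝ => w * y / (y + b * (1 - y)) + ε)
        (w * b / (x + b * (1 - x)) ^ 2) x := fun x hx => (aux_dS w b x hx).add_const ε
  -- first derivative
  have hd1 : ∀ x : ℝ, x + b * (1 - x) ≠ 0 → HasDerivAt gc (g1 x) x := by
    intro x hx
    rw [hgcfun]
    have h := (((hA x).mul (hSfull x hx)).mul (hE x)).sub (hasDerivAt_id x)
    exact h.congr_deriv rfl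
  -- second derivative of g1
  have hd2 : ∀ x : ℝ, x + b * (1 - x) ≠ 0 → HasDerivAt g1
      (2 * Δ * (1 - ηc) * (w * x / (x + b * (1 - x)) + ε)
        + 2 * w * b / (x + b * (1 - x)) ^ 3
          * ((ηc * (1 - x) + x) * (b * αF - αR)
            + (1 - ηc) * ((αF - αR) * x + αR) * (x + b * (1 - x)))) x := by
    intro x hx
    have hP : HasDerivAt (fun y : ℝ =>
        Δ * (w * y / (y + b * (1 - y)) + ε) + (Δ * y + αR) * (w * b / (y + b * (1 - y)) ^ 2))
        (Δ * (w * b / (x + b * (1 - x)) ^ 2)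
          + (Δ * (w * b / (x + b * (1 - x)) ^ 2)
            + (Δ * x + αR) * (-2 * w * b * (1 - b) / (x + b * (1 - x)) ^ 3))) x :=
      ((hSfull x hx).const_mul Δ).add ((hA x).mul (aux_dS2 w b x hx))
    have h := ((hP.mul (hE x)).add (((hA x).mul (hSfull x hx)).mul_const (1 - ηc))).sub_const 1
    refine h.congr_deriv ?_
    rw [hΔ]
    field_simp
    ring
  -- positivity of the denominator on [0,1)
  have hdpos : ∀ β ∈ Set.Ico (0:ℝ) 1, 0 < β + b * (1 - β) := by
    rintro β ⟨h0, h1⟩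
    nlinarith
  -- the set where denominator is nonzero is open
  have hcont : Continuous fun x : ℝ => x + b * (1 - x) :=
    continuous_id.add (continuous_const.mul (continuous_const.sub continuous_id))
  have hU : IsOpen {x : ℝ | x + b * (1 - x) ≠ 0} := by
    have : {x : ℝ | x + b * (1 - x) ≠ 0} = (fun x : ℝ => x + b * (1 - x)) ⁻¹' {(0:ℝ)}ᶜ := rfl
    rw [this]
    exact isOpen_compl_singleton.preimage hcont
  -- deriv gc = g1 on a neighborhood of each β ∈ [0,1)
  have key : ∀ β ∈ Set.Ico (0:ℝ) 1, deriv (deriv gc) β =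
      2 * Δ * (1 - ηc) * (w * β / (β + b * (1 - β)) + ε)
        + 2 * w * b / (β + b * (1 - β)) ^ 3
          * ((ηc * (1 - β) + β) * (b * αF - αR)
            + (1 - ηc) * ((αF - αR) * β + αR) * (β + b * (1 - β))) := by
    intro β hβ
    have hne : β + b * (1 - β) ≠ 0 := ne_of_gt (hdpos β hβ)
    have hmem : {x : ℝ | x + b * (1 - x) ≠ 0} ∈ nhds β := hU.mem_nhds hne
    have hev : deriv gc =ᶠ[nhds β] g1 :=
      Filter.eventuallyEq_of_mem hmem fun x hx => (hd1 x hx).deriv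
    rw [hev.deriv_eq]
    exact (hd2 β hne).deriv
  have hpos : ∀ β ∈ Set.Ico (0:ℝ) 1, 0 < deriv (deriv gc) β := by
    rintro β hβ
    obtain ⟨h0, h1⟩ := hβ
    rw [key β ⟨h0, h1⟩]
    have hd := hdpos β ⟨h0, h1⟩
    have hS : 0 < w * β / (β + b * (1 - β)) + ε := by positivity
    have hE' : 0 < ηc * (1 - β) + β := by nlinarith
    have hbr : 0 ≤ (ηc * (1 - β) + β) * (b * αF - αR)
        + (1 - ηc) * ((αF - αR) * β + αR) * (β + b * (1 - β)) := by
      have h1' : 0 ≤ (ηc * (1 - β) + β) * (b * αF - αR) := by nlinarith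
      have hApos : 0 < (αF - αR) * β + αR := by nlinarith
      have h2' : 0 < (1 - ηc) * ((αF - αR) * β + αR) * (β + b * (1 - β)) :=
        mul_pos (mul_pos (by linarith : (0:ℝ) < 1 - ηc) hApos) hd
      linarith
    have ht1 : 0 < 2 * Δ * (1 - ηc) * (w * β / (β + b * (1 - β)) + ε) := by
      have : 0 < 1 - ηc := by linarith
      positivity
    have ht2 : 0 ≤ 2 * w * b / (β + b * (1 - β)) ^ 3 * ((ηc * (1 - β) + β) * (b * αF - αR)
        + (1 - ηc) * ((αF - αR) * β + αR) * (β + b * (1 - β))) := by positivity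
    linarith
  refine ⟨hpos, ?_⟩
  apply strictConvexOn_of_deriv2_pos (convex_Ico 0 1)
  · intro x hx
    exact ((hd1 x (ne_of_gt (hdpos x hx))).continuousAt).continuousWithinAt
  · intro x hx
    rw [interior_Ico] at hx
    have hx' : x ∈ Set.Ico (0:ℝ) 1 := ⟨le_of_lt hx.1, hx.2⟩
    have := hpos x hx'
    simpa [Function.iterate_succ, Function.comp] using this
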